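/- Under the hypotheses below, in the integral group ring ℤ[G × U] one has T̲₃ · T̲₂ = T̲₂ · T̲₃ = (nλ − 1)·(T̲₃ + T̲₄), where for a subset A of G × U, A̲ denotes the sum of the elements of A. -/

import Mathlib

open scoped Pointwise

/-- The sum of the elements of a finite subset `A` of a group `G`
in the integral group ring `ℤ[G]`. -/
noncomputable def grpSum (G : Type*) [Group G] (A : Finset G) : MonoidAlgebra ℤ G :=
  ∑ a ∈ A, MonoidAlgebra.of ℤ G a

lemma grpSum_apply {H : Type*} [Group H] [DecidableEq H] (A : Finset H) (h : H) :
    (grpSum H A).coeff h = if h ∈ A then 1 else 0 := by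
  unfold grpSum
  rw [MonoidAlgebra.coeff_sum, Finset.sum_apply']
  simp [MonoidAlgebra.of_apply, Finsupp.single_apply]

lemma grpSum_mul_apply {H : Type*} [Group H] [DecidableEq H] (A B : Finset H) (h : H) :
    (grpSum H A * grpSum H B).coeff h = ((A.filter fun a => a⁻¹ * h ∈ B).card : ℤ) := by
  have hmul : grpSum H A * grpSum H B = ∑ a ∈ A, ∑ b ∈ B, MonoidAlgebra.single (a * b) (1 : ℤ) := by
    unfold grpSum
    rw [Finset.sum_mul_sum]
    simp [MonoidAlgebra.of_apply, MonoidAlgebra.single_mul_single]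
  rw [hmul, MonoidAlgebra.coeff_sum, Finset.sum_apply']
  have : ∀ a ∈ A, (∑ b ∈ B, MonoidAlgebra.single (a * b) (1:ℤ)).coeff h
      = if a⁻¹ * h ∈ B then 1 else 0 := by
    intro a _
    rw [MonoidAlgebra.coeff_sum, Finset.sum_apply']
    have : ∀ b ∈ B, (MonoidAlgebra.single (a*b) (1:ℤ)).coeff h = if b = a⁻¹ * h then 1 else 0 := by
      intro b _
      rw [MonoidAlgebra.coeff_single, Finsupp.single_apply]
      congr 1
      simp [eq_comm, eq_inv_mul_iff_mul_eq]
    rw [Finset.sum_congr rfl this, Finset.sum_ite_eq' B (a⁻¹*h) (fun _ => (1:ℤ))]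
  rw [Finset.sum_congr rfl this, Finset.sum_boole]

theorem linked_system_T3_mul_T2
    {G U : Type*} [Group G] [Fintype G] [DecidableEq G]
    [Group U] [Fintype U] [DecidableEq U]
    (N : Subgroup G) [DecidablePred (· ∈ N)]
    (n l w μ ν : ℕ) (hn : 2 ≤ n) (hN : Nat.card N = n) (hl : 1 ≤ l)
    (hG : Fintype.card G = n ^ 2 * l) (hU : Fintype.card U = w + 1) (hw : 2 ≤ w)
    (X : U → Finset G)
    (hXinv : ∀ u : U, u ≠ 1 → (X u)⁻¹ = X u⁻¹)
    (hXtrans : ∀ u : U, u ≠ 1 → ∀ g : G, ((X u).filter (fun x => g⁻¹ * x ∈ N)).card = 1)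
    (hXX : ∀ u : U, u ≠ 1 →
      grpSum G (X u) * grpSum G (X u⁻¹) =
        ((n * l : ℕ) : ℤ) • (1 : MonoidAlgebra ℤ G) +
          (l : ℤ) • grpSum G (Finset.univ.filter (· ∉ N)))
    (hXY : ∀ u v : U, u ≠ 1 → v ≠ 1 → u * v ≠ 1 →
      grpSum G (X u) * grpSum G (X v) =
        (μ : ℤ) • grpSum G (X (u * v)) + (ν : ℤ) • grpSum G (Finset.univ \ X (u * v)))
    (T₀ T₁ T₂ T₃ T₄ : Finset (G × U))
    (hT₀ : T₀ = {(1, 1)})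
    (hT₁ : T₁ = ((Finset.univ.filter (· ∈ N)).erase 1) ×ˢ {(1 : U)})
    (hT₂ : T₂ = (Finset.univ.filter (· ∉ N)) ×ˢ {(1 : U)})
    (hT₃ : T₃ = Finset.univ.filter (fun p : G × U => p.2 ≠ 1 ∧ p.1 ∈ X p.2))
    (hT₄ : T₄ = Finset.univ.filter (fun p : G × U => p.2 ≠ 1 ∧ p.1 ∉ X p.2)) :
    grpSum (G × U) T₃ * grpSum (G × U) T₂ =
        ((n * l : ℕ) - 1 : ℤ) • (grpSum (G × U) T₃ + grpSum (G × U) T₄) ∧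
    grpSum (G × U) T₂ * grpSum (G × U) T₃ =
        ((n * l : ℕ) - 1 : ℤ) • (grpSum (G × U) T₃ + grpSum (G × U) T₄) := by
  -- count of X u inside a left coset, variant forms
  have count1 : ∀ u : U, u ≠ 1 → ∀ g : G, ((X u).filter (fun x => x⁻¹ * g ∈ N)).card = 1 := by
    intro u hu g
    rw [← hXtrans u hu g]
    congr 1
    apply Finset.filter_congr
    intro x _
    rw [← N.inv_mem_iff (x := x⁻¹ * g), mul_inv_rev, inv_inv]
  have count2 : ∀ u : U, u ≠ 1 → ∀ g : G, ((X u).filter (fun x => g * x⁻¹ ∈ N)).card = 1 := by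
    intro u hu g
    have hu' : u⁻¹ ≠ 1 := inv_ne_one.mpr hu
    have : ((X u).filter (fun x => g * x⁻¹ ∈ N)).card
        = ((X u⁻¹).filter (fun y => (g⁻¹)⁻¹ * y ∈ N)).card := by
      apply Finset.card_bij' (i := fun x _ => x⁻¹) (j := fun y _ => y⁻¹)
      · intro x _; simp
      · intro y _; simp
      · intro x hx
        simp only [Finset.mem_filter] at hx
        simp only [Finset.mem_filter]
        constructor
        · rw [← hXinv u hu, Finset.mem_inv']
          simpa using hx.1
        · rw [inv_inv]; exact hx.2
      · intro y hy
        simp only [Finset.mem_filter] at hy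
        simp only [Finset.mem_filter]
        constructor
        · have : y ∈ (X u)⁻¹ := by rw [hXinv u hu]; exact hy.1
          rwa [Finset.mem_inv'] at this
        · rw [inv_inv]; simpa using hy.2
    rw [this, hXtrans u⁻¹ hu' g⁻¹]
  -- each coset has n elements
  have hcoset : ∀ x : G, (Finset.univ.filter (fun g : G => g⁻¹ * x ∈ N)).card = n := by
    intro x
    have hNc : (Finset.univ.filter (· ∈ N)).card = n := by
      rw [← Fintype.card_subtype, ← Nat.card_eq_fintype_card]; exact hN
    rw [← hNc]
    refine Finset.card_bij' (fun g _ => g⁻¹ * x) (fun m _ => x * m⁻¹) ?_ ?_ ?_ ?_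
    case refine_1 => intro g hg; simp at hg ⊢; exact hg
    case refine_2 => intro m hm; simp at hm ⊢; exact hm
    case refine_3 => intro g _; group
    case refine_4 => intro m _; group
  -- |X u| = n * l
  have cardX : ∀ u : U, u ≠ 1 → (X u).card = n * l := by
    intro u hu
    have key : ∑ g : G, ((X u).filter (fun x => g⁻¹ * x ∈ N)).card = Fintype.card G := by
      simp [hXtrans u hu]
    have key2 : ∑ g : G, ((X u).filter (fun x => g⁻¹ * x ∈ N)).card = (X u).card * n := by
      have h1 : ∀ g : G, ((X u).filter (fun x => g⁻¹ * x ∈ N)).card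
          = ∑ x ∈ X u, if g⁻¹ * x ∈ N then 1 else 0 := by
        intro g; rw [Finset.sum_boole]; simp
      rw [Finset.sum_congr rfl (fun g _ => h1 g), Finset.sum_comm]
      have h2 : ∀ x ∈ X u, (∑ g : G, if g⁻¹ * x ∈ N then 1 else 0) = n := by
        intro x _
        rw [Finset.sum_boole]
        simp only [Nat.cast_id]
        exact hcoset x
      rw [Finset.sum_congr rfl h2, Finset.sum_const, smul_eq_mul]
    have : (X u).card * n = (n * l) * n := by
      rw [← key2, key, hG]; ring
    exact Nat.eq_of_mul_eq_mul_right (by omega) this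
  have hnl1 : 1 ≤ n * l := Nat.one_le_iff_ne_zero.mpr (by positivity)
  -- RHS coefficient
  have hRHS : ∀ g : G, ∀ u : U,
      (((n * l : ℕ) - 1 : ℤ) • (grpSum (G × U) T₃ + grpSum (G × U) T₄)).coeff (g, u)
        = if u = 1 then 0 else ((n * l : ℕ) : ℤ) - 1 := by
    intro g u
    rw [MonoidAlgebra.coeff_smul, Finsupp.smul_apply, MonoidAlgebra.coeff_add, Finsupp.add_apply, grpSum_apply, grpSum_apply]
    by_cases hu : u = 1
    · subst hu
      have h3 : (g, (1:U)) ∉ T₃ := by simp [hT₃]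
      have h4 : (g, (1:U)) ∉ T₄ := by simp [hT₄]
      rw [if_pos rfl, if_neg h3, if_neg h4]
      simp
    · by_cases hx : g ∈ X u
      · have h3 : (g, u) ∈ T₃ := by simp [hT₃, hu, hx]
        have h4 : (g, u) ∉ T₄ := by simp [hT₄, hu, hx]
        simp [h3, h4, hu]
      · have h3 : (g, u) ∉ T₃ := by simp [hT₃, hu, hx]
        have h4 : (g, u) ∈ T₄ := by simp [hT₄, hu, hx]
        simp [h3, h4, hu]
  constructor
  · refine MonoidAlgebra.ext (Finsupp.ext fun p => ?_)
    obtain ⟨g, u⟩ := p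
    rw [grpSum_mul_apply, hRHS g u]
    by_cases hu : u = 1
    · subst hu
      have hempty : T₃.filter (fun q => q⁻¹ * (g, 1) ∈ T₂) = ∅ := by
        apply Finset.filter_false_of_mem
        intro q hq
        rw [hT₃, Finset.mem_filter] at hq
        rw [hT₂]
        simp only [Finset.mem_product, Finset.mem_singleton]
        intro hmem
        have h2 : q.2⁻¹ * 1 = 1 := hmem.2
        exact hq.2.1 (by rwa [mul_one, inv_eq_one] at h2)
      simp [hempty]
    · rw [if_neg hu]
      have hset : T₃.filter (fun q => q⁻¹ * (g, u) ∈ T₂)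
          = ((X u).filter (fun x => x⁻¹ * g ∉ N)).image (fun x => (x, u)) := by
        ext q
        obtain ⟨a, b⟩ := q
        simp only [hT₂, hT₃, Finset.mem_filter, Finset.mem_univ, true_and,
          Finset.mem_product, Finset.mem_singleton, Finset.mem_image, Prod.mk.injEq]
        constructor
        · rintro ⟨⟨hb, ha⟩, h1, h2⟩
          have hbu : b = u := by
            have : b⁻¹ * u = 1 := h2
            rwa [inv_mul_eq_one] at this
          subst hbu
          exact ⟨a, ⟨ha, h1⟩, rfl, rfl⟩
        · rintro ⟨x, ⟨hx1, hx2⟩, rfl, rfl⟩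
          exact ⟨⟨hu, hx1⟩, hx2, inv_mul_cancel u⟩
      rw [hset, Finset.card_image_of_injective _
        (fun x y hxy => (Prod.mk.injEq _ _ _ _ ▸ hxy : _ ∧ _).1)]
      have hsplit := Finset.card_filter_add_card_filter_not
        (s := X u) (p := fun x => x⁻¹ * g ∈ N)
      rw [count1 u hu g, cardX u hu] at hsplit
      have hc : ((X u).filter (fun x => x⁻¹ * g ∉ N)).card = n * l - 1 := by omega
      rw [hc]
      push_cast [Nat.cast_sub hnl1]
      ring
  · refine MonoidAlgebra.ext (Finsupp.ext fun p => ?_)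
    obtain ⟨g, u⟩ := p
    rw [grpSum_mul_apply, hRHS g u]
    by_cases hu : u = 1
    · subst hu
      have hempty : T₂.filter (fun q => q⁻¹ * (g, 1) ∈ T₃) = ∅ := by
        apply Finset.filter_false_of_mem
        intro q hq
        rw [hT₂, Finset.mem_product, Finset.mem_singleton] at hq
        rw [hT₃, Finset.mem_filter]
        rintro ⟨-, hne, -⟩
        apply hne
        show q.2⁻¹ * 1 = 1
        rw [hq.2]; group
      simp [hempty]
    · rw [if_neg hu]
      have hset : T₂.filter (fun q => q⁻¹ * (g, u) ∈ T₃)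
          = ((X u).filter (fun x => g * x⁻¹ ∉ N)).image (fun x => (g * x⁻¹, (1 : U))) := by
        ext q
        obtain ⟨a, b⟩ := q
        simp only [hT₂, hT₃, Finset.mem_filter, Finset.mem_univ, true_and,
          Finset.mem_product, Finset.mem_singleton, Finset.mem_image, Prod.mk.injEq,
          Prod.inv_mk, Prod.mk_mul_mk, inv_one, one_mul]
        constructor
        · rintro ⟨⟨ha, rfl⟩, h1, h2⟩
          simp only [inv_one, one_mul] at h2
          refine ⟨a⁻¹ * g, ⟨h2, ?_⟩, by group, rfl⟩
          have : g * (a⁻¹ * g)⁻¹ = a := by group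
          rw [this]
          simpa using ha
        · rintro ⟨x, ⟨hx1, hx2⟩, rfl, rfl⟩
          have h2 : (g * x⁻¹)⁻¹ * g = x := by group
          simp only [inv_one, one_mul]
          exact ⟨⟨by simpa using hx2, trivial⟩, hu, by rw [h2]; exact hx1⟩
      rw [hset, Finset.card_image_of_injective _ (by
        intro x y hxy
        have : g * x⁻¹ = g * y⁻¹ := (Prod.mk.injEq _ _ _ _ ▸ hxy : _ ∧ _).1
        have := mul_left_cancel this
        exact inv_injective this)]
      have hsplit := Finset.card_filter_add_card_filter_not
        (s := X u) (p := fun x => g * x⁻¹ ∈ N)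
      rw [count2 u hu g, cardX u hu] at hsplit
      have hc : ((X u).filter (fun x => g * x⁻¹ ∉ N)).card = n * l - 1 := by omega
      rw [hc]
      push_cast [Nat.cast_sub hnl1]
      ring
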